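/- Let f₀ ∈ L¹(ℝ³ₓ × ℝ³ᵥ) with (1+|ξ|+|η|)^α-weighted bounds on its Fourier transform as in the standing assumptions. Then the term Ŝ^{(1,2)}_{2,ε}(ξ,η) := -(2ε^{-1/2}/(2π)³) ∫ dh φ̂(εh) sin(ε h·η/2) f̂₀(ξ-h; η+(ξ-h)t₁) f̂₀(h; h t₁) satisfies |Ŝ^{(1,2)}_{2,ε}(ξ,η)| ≤ C√ε · sup_{ξ,η}((|ξ|+|η|)|f̂₀(ξ;η)|) · ∫ dξ sup_η((|ξ|+|η|)|f̂₀(ξ;η)|), with C depending only on ‖φ̂‖_∞ and t₁; in particular it tends to 0 as ε→0 pointwise in (ξ,η). -/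

import Mathlib

open MeasureTheory Filter Real

noncomputable section

abbrev Space3 := EuclideanSpace ℝ (Fin 3)

/-- The Fourier-side two-particle term
`Ŝ^{(1,2)}_{2,ε}(ξ,η) = -(2 ε^{-1/2}/(2π)³) ∫ φ̂(εh) sin(ε h·η/2)
f̂₀(ξ-h; η+(ξ-h)t₁) f̂₀(h; h t₁) dh`. -/
def Sterm (φhat : Space3 → ℝ) (fhat : Space3 × Space3 → ℂ) (t₁ : ℝ) (ε : ℝ)
    (ξ η : Space3) : ℂ :=
  (-(2 / Real.sqrt ε) / (2 * π) ^ 3 : ℝ) •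
    ∫ h : Space3,
      (φhat (ε • h) : ℂ) * (Real.sin (ε * (inner ℝ h η : ℝ) / 2) : ℝ) *
        fhat (ξ - h, η + t₁ • (ξ - h)) * fhat (h, t₁ • h)

/-- The term `Ŝ^{(1,2)}_{2,ε}` is bounded by
`C √ε · sup_{ξ,η}((|ξ|+|η|)|f̂₀|) · ∫ dξ sup_η((|ξ|+|η|)|f̂₀|)` with `C` depending
only on `‖φ̂‖_∞` and `t₁`; in particular it tends to `0` as `ε → 0⁺`, pointwise in
`(ξ,η)`. -/
theorem Sterm_vanishes (φhat : Space3 → ℝ) (Cφ : ℝ) (hφ : ∀ h, |φhat h| ≤ Cφ)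
    (fhat : Space3 × Space3 → ℂ) (t₁ : ℝ) (ht₁ : 0 < t₁)
    (M : ℝ) (hM : ∀ ξ η : Space3, (‖ξ‖ + ‖η‖) * ‖fhat (ξ, η)‖ ≤ M)
    (G : Space3 → ℝ) (hG : ∀ ξ η : Space3, (‖ξ‖ + ‖η‖) * ‖fhat (ξ, η)‖ ≤ G ξ)
    (hGint : Integrable G)
    (hint : ∀ ε : ℝ, 0 < ε → ∀ ξ η : Space3,
      Integrable (fun h : Space3 =>
        (φhat (ε • h) : ℂ) * (Real.sin (ε * (inner ℝ h η : ℝ) / 2) : ℝ) *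
          fhat (ξ - h, η + t₁ • (ξ - h)) * fhat (h, t₁ • h))) :
    (∃ C : ℝ, 0 < C ∧ ∀ ε ∈ Set.Ioc (0 : ℝ) 1, ∀ ξ η : Space3,
        ‖Sterm φhat fhat t₁ ε ξ η‖ ≤ C * Real.sqrt ε * M * ∫ x, G x) ∧
    ∀ ξ η : Space3,
      Tendsto (fun ε : ℝ => Sterm φhat fhat t₁ ε ξ η)
        (nhdsWithin 0 (Set.Ioi 0)) (nhds 0) := by
  have hCφ : 0 ≤ Cφ := le_trans (abs_nonneg _) (hφ 0)
  have hM0 : 0 ≤ M := le_trans (by positivity) (hM 0 0)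
  have hG0 : ∀ h, 0 ≤ G h := fun h => le_trans (by positivity) (hG h h)
  have hGI : 0 ≤ ∫ x, G x := integral_nonneg hG0
  set K : ℝ := Cφ * max 1 t₁ / (1 + t₁) with hKdef
  have hK : 0 ≤ K := by
    apply div_nonneg (mul_nonneg hCφ (le_trans zero_le_one (le_max_left _ _)))
    linarith
  -- pointwise bound on the integrand
  have key : ∀ ε : ℝ, 0 < ε → ∀ ξ η h : Space3,
      ‖(φhat (ε • h) : ℂ) * (Real.sin (ε * (inner ℝ h η : ℝ) / 2) : ℝ) *
        fhat (ξ - h, η + t₁ • (ξ - h)) * fhat (h, t₁ • h)‖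
        ≤ (ε / 2 * K * M) * G h := by
    intro ε hε ξ η h
    have hRnn : (0:ℝ) ≤ ε / 2 * K * M * G h :=
      mul_nonneg (mul_nonneg (mul_nonneg (by linarith) hK) hM0) (hG0 h)
    by_cases hη : η = 0
    · simpa [hη] using hRnn
    by_cases hh : h = 0
    · simpa [hh] using hRnn
    have hηn : 0 < ‖η‖ := norm_pos_iff.mpr hη
    have hhn : 0 < ‖h‖ := norm_pos_iff.mpr hh
    set A := ‖fhat (ξ - h, η + t₁ • (ξ - h))‖ with hAdef
    set B := ‖fhat (h, t₁ • h)‖ with hBdef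
    have hA : ‖η‖ * A ≤ M * max 1 t₁ := by
      have h1 : ‖η‖ ≤ max 1 t₁ * (‖ξ - h‖ + ‖η + t₁ • (ξ - h)‖) := by
        have : ‖η‖ ≤ ‖η + t₁ • (ξ - h)‖ + t₁ * ‖ξ - h‖ := by
          calc ‖η‖ = ‖(η + t₁ • (ξ - h)) - t₁ • (ξ - h)‖ := by
                rw [add_sub_cancel_right]
            _ ≤ ‖η + t₁ • (ξ - h)‖ + ‖t₁ • (ξ - h)‖ := norm_sub_le _ _
            _ = ‖η + t₁ • (ξ - h)‖ + t₁ * ‖ξ - h‖ := by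
                rw [norm_smul, Real.norm_eq_abs, abs_of_pos ht₁]
        have h2 : t₁ * ‖ξ - h‖ ≤ max 1 t₁ * ‖ξ - h‖ :=
          mul_le_mul_of_nonneg_right (le_max_right _ _) (norm_nonneg _)
        have h3 : ‖η + t₁ • (ξ - h)‖ ≤ max 1 t₁ * ‖η + t₁ • (ξ - h)‖ :=
          le_mul_of_one_le_left (norm_nonneg _) (le_max_left _ _)
        nlinarith [norm_nonneg (ξ - h), norm_nonneg (η + t₁ • (ξ - h))]
      have h2 := hM (ξ - h) (η + t₁ • (ξ - h))
      have hAnn : (0:ℝ) ≤ A := norm_nonneg _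
      calc ‖η‖ * A ≤ max 1 t₁ * (‖ξ - h‖ + ‖η + t₁ • (ξ - h)‖) * A :=
            mul_le_mul_of_nonneg_right h1 hAnn
        _ = max 1 t₁ * ((‖ξ - h‖ + ‖η + t₁ • (ξ - h)‖) * A) := by ring
        _ ≤ max 1 t₁ * M := mul_le_mul_of_nonneg_left h2
            (le_trans zero_le_one (le_max_left _ _))
        _ = M * max 1 t₁ := mul_comm _ _
    have hB : (1 + t₁) * ‖h‖ * B ≤ G h := by
      have := hG h (t₁ • h)
      rw [norm_smul, Real.norm_eq_abs, abs_of_pos ht₁] at this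
      calc (1 + t₁) * ‖h‖ * B = (‖h‖ + t₁ * ‖h‖) * B := by ring
        _ ≤ G h := this
    have hnorm : ‖(φhat (ε • h) : ℂ) * (Real.sin (ε * (inner ℝ h η : ℝ) / 2) : ℝ) *
        fhat (ξ - h, η + t₁ • (ξ - h)) * fhat (h, t₁ • h)‖
        ≤ Cφ * (ε * ‖h‖ * ‖η‖ / 2) * A * B := by
      rw [norm_mul, norm_mul, norm_mul, Complex.norm_real, Complex.norm_real]
      have e2 : |Real.sin (ε * (inner ℝ h η : ℝ) / 2)| ≤ ε * ‖h‖ * ‖η‖ / 2 := by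
        calc |Real.sin (ε * (inner ℝ h η : ℝ) / 2)| ≤ |ε * (inner ℝ h η : ℝ) / 2| :=
              Real.abs_sin_le_abs
          _ = ε * |(inner ℝ h η : ℝ)| / 2 := by
              rw [abs_div, abs_mul, abs_of_pos hε]
              norm_num
          _ ≤ ε * (‖h‖ * ‖η‖) / 2 := by
              have := abs_real_inner_le_norm h η
              gcongr
          _ = ε * ‖h‖ * ‖η‖ / 2 := by ring
      have step : |φhat (ε • h)| * |Real.sin (ε * (inner ℝ h η : ℝ) / 2)|
          ≤ Cφ * (ε * ‖h‖ * ‖η‖ / 2) :=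
        mul_le_mul (hφ _) e2 (abs_nonneg _) hCφ
      exact mul_le_mul_of_nonneg_right
        (mul_le_mul_of_nonneg_right step (norm_nonneg _)) (norm_nonneg _)
    refine hnorm.trans ?_
    have hprod : (‖η‖ * A) * ((1 + t₁) * ‖h‖ * B) ≤ (M * max 1 t₁) * G h := by
      apply mul_le_mul hA hB (by positivity) (by positivity)
    have hc : (0:ℝ) ≤ Cφ * (ε / 2) / (1 + t₁) := by positivity
    have := mul_le_mul_of_nonneg_left hprod hc
    have ht1 : (1 + t₁) ≠ 0 := by linarith
    calc Cφ * (ε * ‖h‖ * ‖η‖ / 2) * A * B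
        = Cφ * (ε / 2) / (1 + t₁) * ((‖η‖ * A) * ((1 + t₁) * ‖h‖ * B)) := by
          field_simp
      _ ≤ Cφ * (ε / 2) / (1 + t₁) * ((M * max 1 t₁) * G h) := this
      _ = (ε / 2 * K * M) * G h := by rw [hKdef]; field_simp
  -- main bound
  have main : ∀ ε : ℝ, 0 < ε → ∀ ξ η : Space3,
      ‖Sterm φhat fhat t₁ ε ξ η‖ ≤ K / (2 * π) ^ 3 * Real.sqrt ε * M * ∫ x, G x := by
    intro ε hε ξ η
    have hsq : 0 < Real.sqrt ε := Real.sqrt_pos.mpr hε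
    have hInt : ‖∫ h : Space3,
        (φhat (ε • h) : ℂ) * (Real.sin (ε * (inner ℝ h η : ℝ) / 2) : ℝ) *
          fhat (ξ - h, η + t₁ • (ξ - h)) * fhat (h, t₁ • h)‖
        ≤ (ε / 2 * K * M) * ∫ x, G x := by
      rw [← integral_const_mul]
      exact norm_integral_le_of_norm_le (hGint.const_mul _)
        (Filter.Eventually.of_forall (key ε hε ξ η))
    rw [Sterm, norm_smul, Real.norm_eq_abs]
    have habs : |(-(2 / Real.sqrt ε) / (2 * π) ^ 3 : ℝ)| = 2 / Real.sqrt ε / (2 * π) ^ 3 := by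
      rw [abs_div, abs_neg, abs_of_pos (by positivity : (0:ℝ) < 2 / Real.sqrt ε),
        abs_of_pos (by positivity : (0:ℝ) < (2 * π) ^ 3)]
    rw [habs]
    calc 2 / Real.sqrt ε / (2 * π) ^ 3 * ‖_‖
        ≤ 2 / Real.sqrt ε / (2 * π) ^ 3 * ((ε / 2 * K * M) * ∫ x, G x) := by
          gcongr
      _ = ε / Real.sqrt ε * (K / (2 * π) ^ 3 * M * ∫ x, G x) := by ring
      _ = K / (2 * π) ^ 3 * Real.sqrt ε * M * ∫ x, G x := by
          rw [Real.div_sqrt]; ring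
  constructor
  · refine ⟨K / (2 * π) ^ 3 + 1, by positivity, fun ε hε ξ η => ?_⟩
    refine (main ε hε.1 ξ η).trans ?_
    have : (0:ℝ) ≤ Real.sqrt ε * M * ∫ x, G x := by positivity
    nlinarith
  · intro ξ η
    refine squeeze_zero_norm'
      (a := fun ε => K / (2 * π) ^ 3 * Real.sqrt ε * M * ∫ x, G x) ?_ ?_
    · filter_upwards [self_mem_nhdsWithin] with ε (hε : ε ∈ Set.Ioi 0)
      exact main ε hε ξ η
    · have h1 : Tendsto Real.sqrt (nhds 0) (nhds 0) := by
        simpa using Real.continuous_sqrt.tendsto 0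
      have := ((h1.const_mul (K / (2 * π) ^ 3)).mul_const M).mul_const (∫ x, G x)
      simpa using this.mono_left nhdsWithin_le_nhds


end
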